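/- Let G be a finite abelian group with the uniformly periodic tiling (UPT) property, and let m be a square-free positive integer with gcd(|G|, m) = 1. Then the direct product group G × Z_m also has the uniformly periodic tiling (UPT) property. -/

import Mathlib

/-- `(Ω, T)` is a tiling pair of the abelian group `G`: every element of `G`
has a unique representation `ω + t` with `ω ∈ Ω`, `t ∈ T`. -/
def IsTilingPair {G : Type*} [AddCommGroup G] (Ω T : Set G) : Prop :=
  ∀ g : G, ∃! p : G × G, p.1 ∈ Ω ∧ p.2 ∈ T ∧ p.1 + p.2 = g

/-- A nonempty subset `A` of `G` is periodic if `A + g = A` for some nonzero `g`. -/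
def IsPeriodic {G : Type*} [AddCommGroup G] (A : Set G) : Prop :=
  A.Nonempty ∧ ∃ g : G, g ≠ 0 ∧ (fun a => a + g) '' A = A

/-- `Ω` is a tile of `G` if it has a tiling complement. -/
def IsTile {G : Type*} [AddCommGroup G] (Ω : Set G) : Prop :=
  ∃ T : Set G, IsTilingPair Ω T

/-- `G` has the periodic tiling (PT) property: for every tiling pair `(Ω, T)`,
either `Ω` is periodic, or `T` can be replaced by a periodic tiling complement. -/
def HasPT (G : Type*) [AddCommGroup G] : Prop :=
  ∀ Ω T : Set G, IsTilingPair Ω T →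
    IsPeriodic Ω ∨ ∃ T' : Set G, IsPeriodic T' ∧ IsTilingPair Ω T'

/-- A tile `Ω` is uniformly periodic if all its tiling complements share a
common nonzero period. -/
def UniformlyPeriodic {G : Type*} [AddCommGroup G] (Ω : Set G) : Prop :=
  ∃ g : G, g ≠ 0 ∧ ∀ T : Set G, IsTilingPair Ω T → (fun t => t + g) '' T = T

/-- A tile `Ω` is dual uniformly periodic if there is a periodic tile `Ω'`
which is a tiling complement of every tiling complement of `Ω`. -/
def DualUniformlyPeriodic {G : Type*} [AddCommGroup G] (Ω : Set G) : Prop :=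
  ∃ Ω' : Set G, IsPeriodic Ω' ∧ IsTile Ω' ∧
    ∀ T : Set G, IsTilingPair Ω T → IsTilingPair Ω' T

/-- `G` has the uniformly periodic tiling (UPT) property: every tile of `G`
is either uniformly periodic or dual uniformly periodic. -/
def HasUPT (G : Type*) [AddCommGroup G] : Prop :=
  ∀ Ω : Set G, IsTile Ω → UniformlyPeriodic Ω ∨ DualUniformlyPeriodic Ω

namespace UPTaux
set_option linter.unusedSectionVars false

open Finset

variable {H : Type*} [AddCommGroup H] [Fintype H] [DecidableEq H]

noncomputable def fs (S : Set H) : Finset H := (Set.toFinite S).toFinset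

@[simp] lemma mem_fs {S : Set H} {x : H} : x ∈ fs S ↔ x ∈ S := Set.Finite.mem_toFinset _

lemma fs_card (S : Set H) : (fs S).card = S.ncard := (Set.ncard_eq_toFinset_card _ _).symm

noncomputable def dcount (q : ℕ) (T Ω : Set H) (g : H) : ℕ :=
  ((fs T ×ˢ fs Ω).filter (fun p => q • p.1 + p.2 = g)).card

lemma card_eq_one_iff_existsUnique {α : Type*} {s : Finset α} :
    s.card = 1 ↔ ∃! a, a ∈ s := by
  constructor
  · intro h
    obtain ⟨a, ha⟩ := Finset.card_eq_one.mp h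
    exact ⟨a, by simp [ha], fun b hb => by simpa [ha] using hb⟩
  · rintro ⟨a, ha, hu⟩
    have : s = {a} := Finset.eq_singleton_iff_unique_mem.mpr ⟨ha, hu⟩
    simp [this]

lemma isTilingPair_iff_pc {Ω T : Set H} :
    IsTilingPair Ω T ↔ ∀ g, ((fs Ω ×ˢ fs T).filter (fun p => p.1 + p.2 = g)).card = 1 := by
  unfold IsTilingPair
  refine forall_congr' fun g => ?_
  rw [card_eq_one_iff_existsUnique]
  apply existsUnique_congr
  intro p
  simp [Finset.mem_filter, Finset.mem_product, and_assoc]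

lemma dcount_modeq {Ω T : Set H} (h : IsTilingPair Ω T) {q : ℕ} (hq : q.Prime)
    (hndvd : ¬ q ∣ T.ncard) (g₀ : H) : dcount q T Ω g₀ ≡ 1 [MOD q] := by
  haveI : Fact q.Prime := ⟨hq⟩
  haveI : CharP (AddMonoidAlgebra (ZMod q) H) q :=
    charP_of_injective_ringHom
      (f := (AddMonoidAlgebra.singleZeroRingHom : ZMod q →+* AddMonoidAlgebra (ZMod q) H))
      (fun a b hab => by
        have := Finsupp.single_injective (0 : H) (a₁ := a) (a₂ := b)
        simpa using hab) q
  set R := AddMonoidAlgebra (ZMod q) H with hR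
  set a : R := ∑ t ∈ fs T, AddMonoidAlgebra.single t (1 : ZMod q) with ha
  set b : R := ∑ w ∈ fs Ω, AddMonoidAlgebra.single w (1 : ZMod q) with hb
  set u : R := ∑ g : H, AddMonoidAlgebra.single g (1 : ZMod q) with hu
  -- absorption
  have absorb : ∀ h : H, AddMonoidAlgebra.single h (1 : ZMod q) * u = u := by
    intro h
    rw [hu, Finset.mul_sum]
    simp only [AddMonoidAlgebra.single_mul_single, one_mul]
    exact Fintype.sum_equiv (Equiv.addLeft h) _ _ (fun x => rfl)
  -- fiberwise collapsing of a sum of singles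
  have collapse : ∀ (s : Finset (H × H)) (key : H × H → H),
      (∑ p ∈ s, AddMonoidAlgebra.single (key p) (1 : ZMod q))
        = ∑ g : H, ((s.filter (fun p => key p = g)).card : ZMod q) •
            AddMonoidAlgebra.single g (1 : ZMod q) := by
    intro s key
    rw [← Finset.sum_fiberwise_of_maps_to (g := key) (t := Finset.univ)
      (fun x _ => Finset.mem_univ _) (fun p => AddMonoidAlgebra.single (key p) (1 : ZMod q))]
    refine Finset.sum_congr rfl fun g _ => ?_
    rw [Finset.sum_congr rfl (fun p hp => by
      rw [(Finset.mem_filter.mp hp).2]), Finset.sum_const, ← Nat.cast_smul_eq_nsmul (ZMod q)]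
  have hba : b * a = u := by
    rw [ha, hb, Finset.sum_mul_sum]
    have : ∀ (w t : H), AddMonoidAlgebra.single w (1 : ZMod q) *
        AddMonoidAlgebra.single t (1 : ZMod q) =
        AddMonoidAlgebra.single (w + t) (1 : ZMod q) := by
      intro w t; rw [AddMonoidAlgebra.single_mul_single, one_mul]
    simp only [this]
    rw [← Finset.sum_product']
    rw [collapse _ (fun p => p.1 + p.2)]
    have hpc := isTilingPair_iff_pc.mp h
    rw [hu]
    refine Finset.sum_congr rfl fun g _ => ?_
    rw [hpc g]
    simp
  have hau : a * u = (T.ncard : ℕ) • u := by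
    rw [ha, Finset.sum_mul]
    rw [Finset.sum_congr rfl (fun t _ => absorb t), Finset.sum_const, fs_card]
  have hpow : ∀ n : ℕ, a ^ n * u = (T.ncard ^ n : ℕ) • u := by
    intro n
    induction n with
    | zero => simp
    | succ n ih =>
      rw [pow_succ, mul_assoc, hau, mul_smul_comm, ih, smul_smul, ← pow_succ']
  have haq : a ^ q = ∑ t ∈ fs T, AddMonoidAlgebra.single (q • t) (1 : ZMod q) := by
    rw [ha, sum_pow_char]
    refine Finset.sum_congr rfl fun t _ => ?_
    rw [AddMonoidAlgebra.single_pow, one_pow]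
  have hfermat : ((T.ncard ^ (q - 1) : ℕ) : ZMod q) = 1 := by
    rw [Nat.cast_pow]
    refine ZMod.pow_card_sub_one_eq_one ?_
    rw [Ne, ZMod.natCast_eq_zero_iff]
    exact hndvd
  have hmain : a ^ q * b = u := by
    have hq1 : q - 1 + 1 = q := Nat.succ_pred_eq_of_pos hq.pos
    have hstep : a ^ q = a ^ (q - 1) * a := by rw [← pow_succ, hq1]
    calc a ^ q * b = a ^ (q - 1) * (b * a) := by rw [hstep]; ring
      _ = a ^ (q - 1) * u := by rw [hba]
      _ = (T.ncard ^ (q - 1) : ℕ) • u := hpow _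
      _ = u := by rw [← Nat.cast_smul_eq_nsmul (ZMod q), hfermat, one_smul]
  -- expand a^q * b as a sum over pairs
  have hexp : a ^ q * b = ∑ g : H, ((dcount q T Ω g : ℕ) : ZMod q) •
      AddMonoidAlgebra.single g (1 : ZMod q) := by
    rw [haq, hb, Finset.sum_mul_sum]
    have : ∀ (t w : H), AddMonoidAlgebra.single (q • t) (1 : ZMod q) *
        AddMonoidAlgebra.single w (1 : ZMod q) =
        AddMonoidAlgebra.single (q • t + w) (1 : ZMod q) := by
      intro t w; rw [AddMonoidAlgebra.single_mul_single, one_mul]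
    simp only [this]
    rw [← Finset.sum_product']
    exact collapse _ (fun p => q • p.1 + p.2)
  -- evaluate coefficients at g₀
  have := hexp.symm.trans hmain
  have hcoeff := congrArg (fun f : AddMonoidAlgebra (ZMod q) H => f.coeff g₀) this
  simp only [hu] at hcoeff
  rw [AddMonoidAlgebra.coeff_sum, AddMonoidAlgebra.coeff_sum, Finset.sum_apply', Finset.sum_apply'] at hcoeff
  have heval : ∀ (c : ZMod q) (g : H),
      (c • AddMonoidAlgebra.single g (1 : ZMod q)).coeff g₀ = if g = g₀ then c else 0 := by
    intro c g
    rw [AddMonoidAlgebra.coeff_smul_apply, AddMonoidAlgebra.coeff_single, Finsupp.single_apply]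
    split <;> simp
  have heval2 : ∀ g : H, (AddMonoidAlgebra.single g (1 : ZMod q)).coeff g₀
      = if g = g₀ then 1 else 0 := fun g => Finsupp.single_apply
  rw [Finset.sum_congr rfl (fun g _ => heval _ g),
      Finset.sum_congr rfl (fun g _ => heval2 g)] at hcoeff
  rw [Finset.sum_ite_eq' Finset.univ g₀, Finset.sum_ite_eq' Finset.univ g₀] at hcoeff
  simp only [Finset.mem_univ, if_true] at hcoeff
  have : ((dcount q T Ω g₀ : ℕ) : ZMod q) = ((1 : ℕ) : ZMod q) := by
    rw [hcoeff]; simp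
  exact (ZMod.natCast_eq_natCast_iff _ _ _).mp this

lemma tp_comm {Ω T : Set H} (h : IsTilingPair Ω T) : IsTilingPair T Ω := by
  intro g
  obtain ⟨p, ⟨h1, h2, h3⟩, hu⟩ := h g
  refine ⟨(p.2, p.1), ⟨h2, h1, by rw [add_comm]; exact h3⟩, ?_⟩
  rintro ⟨a, b⟩ ⟨ha, hb, hab⟩
  have := hu (b, a) ⟨hb, ha, by rw [add_comm]; exact hab⟩
  simp only [Prod.ext_iff] at this ⊢
  exact ⟨this.2, this.1⟩

lemma tp_nonempty_left {Ω T : Set H} (h : IsTilingPair Ω T) : Ω.Nonempty := by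
  obtain ⟨p, ⟨h1, _, _⟩, _⟩ := h 0
  exact ⟨p.1, h1⟩

lemma tp_nonempty_right {Ω T : Set H} (h : IsTilingPair Ω T) : T.Nonempty :=
  tp_nonempty_left (tp_comm h)

lemma tp_card {Ω T : Set H} (h : IsTilingPair Ω T) :
    Ω.ncard * T.ncard = Fintype.card H := by
  rw [isTilingPair_iff_pc] at h
  have h1 : ∀ s : Finset (H × H), s.card = ∑ g : H, (s.filter (fun p => p.1 + p.2 = g)).card :=
    fun s => Finset.card_eq_sum_card_fiberwise (fun x _ => Finset.mem_univ _)
  have h2 := h1 (fs Ω ×ˢ fs T)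
  rw [Finset.card_product, fs_card, fs_card] at h2
  rw [h2]
  simp [h, Finset.card_univ]

lemma dcount_eq_one {Ω T : Set H} (h : IsTilingPair Ω T) {q : ℕ} (hq : q.Prime)
    (hndvd : ¬ q ∣ T.ncard) : ∀ g, dcount q T Ω g = 1 := by
  have hmod := dcount_modeq h hq hndvd
  have hsum : ∑ g : H, dcount q T Ω g = Fintype.card H := by
    have h1 : ∀ s : Finset (H × H), s.card = ∑ g : H, (s.filter (fun p => q • p.1 + p.2 = g)).card :=
      fun s => Finset.card_eq_sum_card_fiberwise (fun x _ => Finset.mem_univ _)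
    have h2 := h1 (fs T ×ˢ fs Ω)
    rw [Finset.card_product, fs_card, fs_card] at h2
    have : ∑ g : H, dcount q T Ω g = T.ncard * Ω.ncard := h2.symm
    rw [this, mul_comm]
    exact tp_card h
  have hge : ∀ g : H, 1 ≤ dcount q T Ω g := by
    intro g
    rcases Nat.eq_zero_or_pos (dcount q T Ω g) with h0 | h1
    · exfalso
      have := hmod g
      rw [h0] at this
      have : 0 % q = 1 % q := this
      rw [Nat.zero_mod, Nat.mod_eq_of_lt hq.one_lt] at this
      exact absurd this.symm one_ne_zero
    · exact h1
  have heq : ∑ g : H, (1 : ℕ) = ∑ g : H, dcount q T Ω g := by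
    rw [hsum]; simp [Finset.card_univ]
  intro g
  exact ((Finset.sum_eq_sum_iff_of_le (fun i _ => hge i)).mp heq g (Finset.mem_univ g)).symm

lemma dilate_prime {Ω T : Set H} (h : IsTilingPair Ω T) {q : ℕ} (hq : q.Prime)
    (hndvd : ¬ q ∣ T.ncard) :
    Set.InjOn (fun t => q • t) T ∧ IsTilingPair Ω ((fun t => q • t) '' T) := by
  have hd := dcount_eq_one h hq hndvd
  have hd' : ∀ g, ∃! p : H × H, (p.1 ∈ T ∧ p.2 ∈ Ω) ∧ q • p.1 + p.2 = g := by
    intro g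
    have := hd g
    unfold dcount at this
    rw [card_eq_one_iff_existsUnique] at this
    refine existsUnique_congr (fun p => ?_) |>.mp this
    simp [Finset.mem_filter, Finset.mem_product, and_assoc]
  have hΩne : Ω.Nonempty := tp_nonempty_left h
  constructor
  · intro t1 ht1 t2 ht2 heq
    obtain ⟨w, hw⟩ := hΩne
    obtain ⟨p, _, hu⟩ := hd' (q • t1 + w)
    have e1 := hu (t1, w) ⟨⟨ht1, hw⟩, rfl⟩
    have e2 := hu (t2, w) ⟨⟨ht2, hw⟩, by simp only [← heq]⟩
    have : (t1, w) = (t2, w) := e1.trans e2.symm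
    simpa using congrArg Prod.fst this
  · intro g
    obtain ⟨⟨t, w⟩, ⟨⟨htT, hwΩ⟩, hsum⟩, huniq⟩ := hd' g
    refine ⟨(w, q • t), ⟨hwΩ, ⟨t, htT, rfl⟩, by rw [add_comm]; exact hsum⟩, ?_⟩
    rintro ⟨w', b'⟩ ⟨hw', ⟨t', ht', rfl⟩, hsum'⟩
    have := huniq (t', w') ⟨⟨ht', hw'⟩, by rw [add_comm]; exact hsum'⟩
    simp only [Prod.mk.injEq] at this ⊢
    exact ⟨this.2, by rw [this.1]⟩

lemma dilate {Ω : Set H} (k : ℕ) :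
    ∀ T : Set H, 1 ≤ k → IsTilingPair Ω T → Nat.Coprime k T.ncard →
    Set.InjOn (fun t => k • t) T ∧ IsTilingPair Ω ((fun t => k • t) '' T) := by
  induction k using Nat.strong_induction_on with
  | _ k IH =>
  intro T hk h hcop
  by_cases hk1 : k = 1
  · subst hk1
    refine ⟨fun x _ y _ hxy => by simpa using hxy, ?_⟩
    have : (fun t : H => 1 • t) '' T = T := by
      ext x; simp
    rw [this]; exact h
  · have hk0 : 0 < k := hk
    set q := k.minFac with hqdef
    have hqp : q.Prime := Nat.minFac_prime hk1
    have hqdvd : q ∣ k := Nat.minFac_dvd k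
    have hqT : ¬ q ∣ T.ncard := by
      intro hd
      have h1 : q ∣ Nat.gcd k T.ncard := Nat.dvd_gcd hqdvd hd
      rw [hcop] at h1
      exact hqp.ne_one (Nat.dvd_one.mp h1)
    obtain ⟨inj1, tp1⟩ := dilate_prime h hqp hqT
    set T1 := (fun t : H => q • t) '' T with hT1
    have hT1card : T1.ncard = T.ncard := Set.ncard_image_of_injOn inj1
    set k' := k / q with hk'def
    have hkk' : q * k' = k := Nat.mul_div_cancel' hqdvd
    have hk'pos : 1 ≤ k' := Nat.div_pos (Nat.le_of_dvd hk0 hqdvd) hqp.pos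
    have hk'lt : k' < k := Nat.div_lt_self hk0 hqp.one_lt
    have hk'dvd : k' ∣ k := ⟨q, by rw [← hkk']; ring⟩
    have hcop' : Nat.Coprime k' T1.ncard := by
      rw [hT1card]; exact Nat.Coprime.coprime_dvd_left hk'dvd hcop
    obtain ⟨inj2, tp2⟩ := IH k' hk'lt T1 hk'pos tp1 hcop'
    have himg : (fun t : H => k • t) '' T = (fun t : H => k' • t) '' T1 := by
      rw [hT1, Set.image_image]
      apply Set.image_congr
      intro t _
      rw [smul_smul, mul_comm, hkk']
    constructor
    · intro x hx y hy hxy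
      have hx1 : (fun t : H => q • t) x ∈ T1 := Set.mem_image_of_mem _ hx
      have hy1 : (fun t : H => q • t) y ∈ T1 := Set.mem_image_of_mem _ hy
      refine inj1 hx hy (inj2 hx1 hy1 ?_)
      show k' • (q • x) = k' • (q • y)
      rw [smul_smul, smul_smul, mul_comm k' q, hkk']
      exact hxy
    · rw [himg]; exact tp2

section Transport

variable {H₁ H₂ : Type*} [AddCommGroup H₁] [AddCommGroup H₂]

lemma image_symm_image (e : H₁ ≃+ H₂) (S : Set H₂) : e '' (e.symm '' S) = S := by
  ext x
  constructor
  · rintro ⟨y, ⟨z, hz, rfl⟩, rfl⟩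
    simpa using hz
  · intro hx
    exact ⟨e.symm x, ⟨x, hx, rfl⟩, e.apply_symm_apply x⟩

lemma tp_map (e : H₁ ≃+ H₂) {Ω T : Set H₁} (h : IsTilingPair Ω T) :
    IsTilingPair (e '' Ω) (e '' T) := by
  intro g
  obtain ⟨p, ⟨h1, h2, h3⟩, hu⟩ := h (e.symm g)
  refine ⟨(e p.1, e p.2), ⟨Set.mem_image_of_mem _ h1, Set.mem_image_of_mem _ h2, ?_⟩, ?_⟩
  · rw [← map_add, h3, e.apply_symm_apply]
  · rintro ⟨a, b⟩ ⟨⟨a', ha', rfl⟩, ⟨b', hb', rfl⟩, hab⟩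
    have hab' : a' + b' = e.symm g := by
      apply e.injective
      rw [map_add, hab, e.apply_symm_apply]
    have := hu (a', b') ⟨ha', hb', hab'⟩
    simp only [Prod.ext_iff] at this ⊢
    exact ⟨congrArg e this.1, congrArg e this.2⟩

lemma tile_map (e : H₁ ≃+ H₂) {Ω : Set H₁} (h : IsTile Ω) : IsTile (e '' Ω) := by
  obtain ⟨T, hT⟩ := h
  exact ⟨e '' T, tp_map e hT⟩

lemma periodic_map (e : H₁ ≃+ H₂) {A : Set H₁} (h : IsPeriodic A) : IsPeriodic (e '' A) := by
  obtain ⟨⟨a, ha⟩, g, hg, himg⟩ := h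
  refine ⟨⟨e a, Set.mem_image_of_mem _ ha⟩, e g, fun h0 => hg (by simpa using e.injective (by simpa using h0)), ?_⟩
  calc (fun x => x + e g) '' (e '' A) = e '' ((fun x => x + g) '' A) := by
        rw [Set.image_image, Set.image_image]
        exact Set.image_congr (fun x _ => (map_add e x g).symm)
    _ = e '' A := by rw [himg]

lemma tp_of_map (e : H₁ ≃+ H₂) {Ω T : Set H₁} (h : IsTilingPair (e '' Ω) (e '' T)) :
    IsTilingPair Ω T := by
  have := tp_map e.symm h
  rwa [show e.symm '' (e '' Ω) = Ω from image_symm_image e.symm _,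
    show e.symm '' (e '' T) = T from image_symm_image e.symm _] at this

lemma up_pull (e : H₁ ≃+ H₂) {Ω : Set H₁} (h : UniformlyPeriodic (e '' Ω)) :
    UniformlyPeriodic Ω := by
  obtain ⟨g₂, hg₂, hall⟩ := h
  refine ⟨e.symm g₂, fun h0 => hg₂ (by simpa using congrArg e h0), ?_⟩
  intro T hT
  have h1 := hall (e '' T) (tp_map e hT)
  have h2 : e '' ((fun t => t + e.symm g₂) '' T) = e '' T := by
    rw [Set.image_image]
    calc (fun x => e (x + e.symm g₂)) '' T = (fun x => x + g₂) '' (e '' T) := by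
          rw [Set.image_image]
          exact Set.image_congr (fun x _ => by rw [map_add, e.apply_symm_apply])
      _ = e '' T := h1
  exact Set.image_injective.mpr e.injective h2

lemma dup_pull (e : H₁ ≃+ H₂) {Ω : Set H₁} (h : DualUniformlyPeriodic (e '' Ω)) :
    DualUniformlyPeriodic Ω := by
  obtain ⟨Ω₂', hper, htile, hall⟩ := h
  refine ⟨e.symm '' Ω₂', periodic_map e.symm hper, tile_map e.symm htile, ?_⟩
  intro T hT
  have h1 := hall (e '' T) (tp_map e hT)
  have := tp_map e.symm h1
  rwa [show e.symm '' (e '' T) = T from image_symm_image e.symm _] at this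

lemma hasUPT_map (e : H₁ ≃+ H₂) (h : HasUPT H₁) : HasUPT H₂ := by
  intro Ω₂ hΩ₂
  have h1 : IsTile (e.symm '' Ω₂) := tile_map e.symm hΩ₂
  rcases h _ h1 with hup | hdup
  · exact Or.inl (up_pull e.symm hup)
  · exact Or.inr (dup_pull e.symm hdup)

end Transport

section Slicing

variable {K M : Type*} [AddCommGroup K] [AddCommGroup M]

/-- the column of `T` over `y` -/
def col (T : Set (K × M)) (y : M) : Set K := {x | (x, y) ∈ T}

lemma mem_col {T : Set (K × M)} {y : M} {x : K} : x ∈ col T y ↔ (x, y) ∈ T := Iff.rfl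

lemma tp_slice {A : Set K} {T : Set (K × M)}
    (h : IsTilingPair (A ×ˢ ({0} : Set M)) T) (y : M) :
    IsTilingPair A (col T y) := by
  intro x
  obtain ⟨P, ⟨hP1, hP2, hP3⟩, hu⟩ := h (x, y)
  obtain ⟨hP11, hP12⟩ := hP1
  have hP12' : P.1.2 = 0 := hP12
  have hx : P.1.1 + P.2.1 = x := congrArg Prod.fst hP3
  have hy : P.2.2 = y := by
    have := congrArg Prod.snd hP3
    simpa [hP12'] using this
  refine ⟨(P.1.1, P.2.1), ⟨hP11, ?_, hx⟩, ?_⟩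
  · rw [mem_col]
    have : (P.2.1, y) = P.2 := by
      rw [← hy]
    rw [this]; exact hP2
  · rintro ⟨a, c⟩ ⟨ha, hc, hac⟩
    have := hu ((a, 0), (c, y)) ⟨⟨ha, rfl⟩, hc, by
      refine Prod.ext ?_ ?_
      · simpa using hac
      · simp⟩
    have h1 : a = P.1.1 := by
      have := congrArg (fun z : (K × M) × (K × M) => z.1.1) this
      simpa using this
    have h2 : c = P.2.1 := by
      have := congrArg (fun z : (K × M) × (K × M) => z.2.1) this
      simpa using this
    simp [h1, h2]

lemma tp_assemble {A : Set K} {T : Set (K × M)}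
    (h : ∀ y : M, IsTilingPair A (col T y)) :
    IsTilingPair (A ×ˢ ({0} : Set M)) T := by
  intro g
  obtain ⟨p, ⟨ha, hc, hsum⟩, hu⟩ := h g.2 g.1
  refine ⟨((p.1, 0), (p.2, g.2)), ⟨⟨ha, rfl⟩, hc, ?_⟩, ?_⟩
  · exact Prod.ext (by simpa using hsum) (by simp)
  · rintro ⟨P1, P2⟩ ⟨⟨hP11, hP12⟩, hP2, hP3⟩
    have hP12' : P1.2 = 0 := hP12
    have hx : P1.1 + P2.1 = g.1 := congrArg Prod.fst hP3
    have hy : P2.2 = g.2 := by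
      have := congrArg Prod.snd hP3
      simpa [hP12'] using this
    have hcol : P2.1 ∈ col T g.2 := by
      rw [mem_col, ← hy]
      exact hP2
    have := hu (P1.1, P2.1) ⟨hP11, hcol, hx⟩
    have h1 : P1.1 = p.1 := congrArg Prod.fst this
    have h2 : P2.1 = p.2 := congrArg Prod.snd this
    refine Prod.ext (Prod.ext (by simpa using h1) (by simpa using hP12')) (Prod.ext (by simpa using h2) (by simpa using hy))

lemma tp_assemble2 {A₀ : Set K} {C : Set (K × M)}
    (hinj : Set.InjOn Prod.fst C)
    (htp : IsTilingPair A₀ (Prod.fst '' C)) :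
    IsTilingPair (A₀ ×ˢ (Set.univ : Set M)) C := by
  intro g
  obtain ⟨p, ⟨ha, hb, hsum⟩, hu⟩ := htp g.1
  obtain ⟨c, hcC, hcb⟩ := hb
  refine ⟨((p.1, g.2 - c.2), c), ⟨⟨ha, trivial⟩, hcC, ?_⟩, ?_⟩
  · refine Prod.ext ?_ ?_
    · show p.1 + c.1 = g.1
      rw [hcb]; exact hsum
    · show g.2 - c.2 + c.2 = g.2
      exact sub_add_cancel _ _
  · rintro ⟨P1, P2⟩ ⟨⟨hP11, -⟩, hP2C, hP3⟩
    have hx : P1.1 + P2.1 = g.1 := congrArg Prod.fst hP3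
    have hy : P1.2 + P2.2 = g.2 := congrArg Prod.snd hP3
    have := hu (P1.1, P2.1) ⟨hP11, ⟨P2, hP2C, rfl⟩, hx⟩
    have h1 : P1.1 = p.1 := congrArg Prod.fst this
    have h2 : P2.1 = p.2 := congrArg Prod.snd this
    have hP2c : P2 = c := by
      apply hinj hP2C hcC
      rw [h2, hcb]
    refine Prod.ext (Prod.ext (by simpa using h1) ?_) (by simpa using hP2c)
    show P1.2 = g.2 - c.2
    rw [← hP2c]
    have : P1.2 = g.2 - P2.2 := by
      rw [← hy]; abel
    simpa using this

end Slicing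

section Flatten

lemma nat_coprime_of_prime {a b : ℕ} (h : ∀ p : ℕ, p.Prime → p ∣ a → p ∣ b → False) :
    Nat.Coprime a b := by
  by_contra hne
  set g := Nat.gcd a b with hg
  rcases eq_or_ne g 0 with h0 | h0
  · have ha : a = 0 := Nat.eq_zero_of_gcd_eq_zero_left h0
    have hb : b = 0 := Nat.eq_zero_of_gcd_eq_zero_right h0
    exact h 2 Nat.prime_two (ha ▸ dvd_zero 2) (hb ▸ dvd_zero 2)
  · have hq : g.minFac.Prime := Nat.minFac_prime hne
    exact h g.minFac hq ((Nat.minFac_dvd g).trans (Nat.gcd_dvd_left a b))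
      ((Nat.minFac_dvd g).trans (Nat.gcd_dvd_right a b))

lemma prod_nsmul {α β : Type*} [AddMonoid α] [AddMonoid β] (n : ℕ) (p : α × β) :
    n • p = (n • p.1, n • p.2) := by
  induction n with
  | zero => simp; rfl
  | succ n ih => rw [succ_nsmul, succ_nsmul, succ_nsmul, ih]; rfl

lemma flat {K : Type*} [AddCommGroup K] [Fintype K] [DecidableEq K] {r : ℕ} [NeZero r]
    {Ω : Set (K × ZMod r)} (hT : IsTile Ω)
    (h1 : Nat.Coprime (AddMonoid.exponent K) r)
    (h2 : Nat.Coprime Ω.ncard r) :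
    Set.InjOn Prod.fst Ω ∧
      ∀ T : Set (K × ZMod r), IsTilingPair Ω T → ∀ y : ZMod r,
        IsTilingPair (Prod.fst '' Ω) (col T y) := by
  obtain ⟨T₀, hT₀⟩ := hT
  set E := AddMonoid.exponent K with hE
  have hEne : E ≠ 0 := AddMonoid.exponent_ne_zero_of_finite
  have hrne : r ≠ 0 := NeZero.ne r
  obtain ⟨k₀, hk₀E, hk₀r⟩ := Nat.chineseRemainder h1 1 0
  set k := k₀ + E * r with hkdef
  have hkE : k ≡ 1 [MOD E] := by
    have : E * r ≡ 0 [MOD E] := (Nat.modEq_zero_iff_dvd).mpr (dvd_mul_right E r)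
    exact ((Nat.ModEq.add_left k₀ this).trans (by rw [Nat.add_zero])).trans hk₀E
  have hkr : k ≡ 0 [MOD r] := by
    have : E * r ≡ 0 [MOD r] := (Nat.modEq_zero_iff_dvd).mpr (dvd_mul_left r E)
    exact ((Nat.ModEq.add_left k₀ this).trans (by rw [Nat.add_zero])).trans hk₀r
  have hk1 : 1 ≤ k := by
    have : 1 ≤ E * r := Nat.one_le_iff_ne_zero.mpr (Nat.mul_ne_zero hEne hrne)
    omega
  -- the action of the dilation
  have hfix : ∀ x : K, k • x = x := by
    intro x
    have key : ∀ j : ℕ, j • x = (j % E) • x := by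
      intro j
      conv_lhs => rw [← Nat.div_add_mod j E]
      rw [add_nsmul, mul_comm, mul_nsmul, AddMonoid.exponent_nsmul_eq_zero, zero_add]
    rw [key k, hkE, ← key 1, one_nsmul]
  have hkill : ∀ y : ZMod r, k • y = 0 := by
    intro y
    obtain ⟨c, hc⟩ := (Nat.modEq_zero_iff_dvd).mp hkr
    rw [hc, mul_nsmul]
    have : r • y = 0 := by
      rw [nsmul_eq_mul, ZMod.natCast_self, zero_mul]
    rw [this, smul_zero]
  have hact : ∀ z : K × ZMod r, k • z = (z.1, 0) := by
    intro z
    rw [prod_nsmul, hfix, hkill]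
  -- coprimality of k with the size of Ω
  have hΩdvd : Ω.ncard ∣ Fintype.card K * r := by
    refine ⟨T₀.ncard, ?_⟩
    have := tp_card hT₀
    rw [Fintype.card_prod, ZMod.card] at this
    exact this.symm
  have hcop : Nat.Coprime k Ω.ncard := by
    apply nat_coprime_of_prime
    intro p hp hpk hpΩ
    haveI : Fact p.Prime := ⟨hp⟩
    have hpKr : p ∣ Fintype.card K * r := hpΩ.trans hΩdvd
    rcases hp.dvd_mul.mp hpKr with hpK | hpr
    · obtain ⟨x, hx⟩ := exists_prime_addOrderOf_dvd_card p hpK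
      have hpE : p ∣ E := hx ▸ AddMonoid.addOrder_dvd_exponent x
      have : k ≡ 1 [MOD p] := hkE.of_dvd hpE
      have h0 : (0 : ℕ) ≡ 1 [MOD p] := ((Nat.modEq_zero_iff_dvd).mpr hpk).symm.trans this
      have : 0 % p = 1 % p := h0
      rw [Nat.zero_mod, Nat.mod_eq_of_lt hp.one_lt] at this
      exact one_ne_zero this.symm
    · exact hp.ne_one (Nat.eq_one_of_dvd_coprimes h2 hpΩ hpr)
  -- dilate Ω
  have hdil : ∀ T : Set (K × ZMod r), IsTilingPair Ω T →
      Set.InjOn (fun t => k • t) Ω ∧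
        IsTilingPair T ((fun t => k • t) '' Ω) := by
    intro T hTP
    exact dilate k Ω hk1 (tp_comm hTP) hcop
  obtain ⟨hinj₀, -⟩ := hdil T₀ hT₀
  have hinjfst : Set.InjOn Prod.fst Ω := by
    intro x hx y hy hxy
    apply hinj₀ hx hy
    show k • x = k • y
    rw [hact, hact, hxy]
  have himg : (fun t : K × ZMod r => k • t) '' Ω = (Prod.fst '' Ω) ×ˢ ({0} : Set (ZMod r)) := by
    ext z
    constructor
    · rintro ⟨w, hw, rfl⟩
      show k • w ∈ _
      rw [hact]
      exact ⟨⟨w, hw, rfl⟩, rfl⟩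
    · rintro ⟨⟨w, hw, hw1⟩, hz2⟩
      refine ⟨w, hw, ?_⟩
      show k • w = z
      rw [hact]
      exact Prod.ext (by simpa using hw1) (by simpa using (hz2 : z.2 = 0).symm)
  refine ⟨hinjfst, ?_⟩
  intro T hTP y
  obtain ⟨-, htp1⟩ := hdil T hTP
  rw [himg] at htp1
  exact tp_slice (tp_comm htp1) y

end Flatten

lemma coprime_prime_not_dvd {a b p : ℕ} (h : Nat.Coprime a b) (hp : p.Prime) (hpa : p ∣ a) :
    ¬ p ∣ b := fun hpb => hp.ne_one (Nat.dvd_one.mp (h ▸ Nat.dvd_gcd hpa hpb))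

theorem main (G : Type*) [AddCommGroup G] [Fintype G]
    (m : ℕ) (hm : 0 < m) (hsq : Squarefree m)
    (hgcd : Nat.gcd (Fintype.card G) m = 1) (hUPT : HasUPT G) :
    HasUPT (G × ZMod m) := by
  classical
  haveI : NeZero m := ⟨hm.ne'⟩
  intro Ω hΩtile
  obtain ⟨T₀, hT₀⟩ := hΩtile
  set n := Fintype.card G with hndef
  set d := Ω.ncard with hddef
  set m₁ := Nat.gcd d m with hm₁def
  set m₂ := m / m₁ with hm₂def
  have hm₁dvd : m₁ ∣ m := Nat.gcd_dvd_right d m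
  have hmm : m₁ * m₂ = m := Nat.mul_div_cancel' hm₁dvd
  have hm₂dvd : m₂ ∣ m := ⟨m₁, by rw [← hmm]; ring⟩
  have hm₁pos : 0 < m₁ := Nat.gcd_pos_of_pos_right d hm
  have hm₂pos : 0 < m₂ := Nat.div_pos (Nat.le_of_dvd hm hm₁dvd) hm₁pos
  haveI : NeZero m₁ := ⟨hm₁pos.ne'⟩
  haveI : NeZero m₂ := ⟨hm₂pos.ne'⟩
  have hsqunit : ∀ p : ℕ, p.Prime → p * p ∣ m → False := fun p hp hpp =>
    hp.one_lt.ne' (Nat.isUnit_iff.mp (hsq p hpp))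
  have hco12 : Nat.Coprime m₁ m₂ := by
    apply nat_coprime_of_prime
    intro p hp hp1 hp2
    exact hsqunit p hp (by rw [← hmm]; exact mul_dvd_mul hp1 hp2)
  have hconm : Nat.Coprime n m := hgcd
  have hcon1 : Nat.Coprime n m₁ := hconm.coprime_dvd_right hm₁dvd
  have hcon2 : Nat.Coprime n m₂ := hconm.coprime_dvd_right hm₂dvd
  have hdm₂ : Nat.Coprime d m₂ := by
    apply nat_coprime_of_prime
    intro p hp hpd hpm₂
    have hpm₁ : p ∣ m₁ := Nat.dvd_gcd hpd (hpm₂.trans hm₂dvd)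
    exact hsqunit p hp (by rw [← hmm]; exact mul_dvd_mul hpm₁ hpm₂)
  -- the coordinate change
  have e₂ : ZMod m ≃+ ZMod m₁ × ZMod m₂ := by
    rw [← hmm]
    exact (ZMod.chineseRemainder hco12).toAddEquiv
  set e : G × ZMod m ≃+ (G × ZMod m₁) × ZMod m₂ :=
    (AddEquiv.prodCongr (AddEquiv.refl G) e₂).trans
      (AddEquiv.prodAssoc (M := G) (N := ZMod m₁) (P := ZMod m₂)).symm with hedef
  set Ω₂ := e '' Ω with hΩ₂def
  have hT₂ : IsTilingPair Ω₂ (e '' T₀) := tp_map e hT₀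
  have hΩ₂card : Ω₂.ncard = d := Set.ncard_image_of_injective Ω e.injective
  suffices h : UniformlyPeriodic Ω₂ ∨ DualUniformlyPeriodic Ω₂ by
    rcases h with h | h
    · exact Or.inl (up_pull e h)
    · exact Or.inr (dup_pull e h)
  -- first flattening: kill the ZMod m₂ coordinate of Ω₂
  have hexp₂ : Nat.Coprime (AddMonoid.exponent (G × ZMod m₁)) m₂ := by
    have hdvd : AddMonoid.exponent (G × ZMod m₁) ∣ Fintype.card (G × ZMod m₁) :=
      AddGroup.exponent_dvd_card
    have hcard : Fintype.card (G × ZMod m₁) = n * m₁ := by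
      simp [Fintype.card_prod, ZMod.card, hndef]
    exact Nat.Coprime.coprime_dvd_left (hcard ▸ hdvd) (Nat.Coprime.mul hcon2 hco12.symm.symm)
  have hd₂ : Nat.Coprime Ω₂.ncard m₂ := by rw [hΩ₂card]; exact hdm₂
  obtain ⟨hinjΩ₂, hslice⟩ := flat ⟨e '' T₀, hT₂⟩ hexp₂ hd₂
  set A := Prod.fst '' Ω₂ with hAdef
  have hAcard : A.ncard = d := by
    rw [hAdef, Set.ncard_image_of_injOn hinjΩ₂, hΩ₂card]
  have hAtile : IsTile A := ⟨col (e '' T₀) 0, hslice _ hT₂ 0⟩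
  by_cases hm₁1 : m₁ = 1
  · -- flat case : use the UPT property of G, transported to G × ZMod m₁
    haveI hsub : Subsingleton (ZMod m₁) := by rw [hm₁1]; infer_instance
    have e₁ : G ≃+ G × ZMod m₁ :=
      { toFun := fun g => (g, 0)
        invFun := fun p => p.1
        left_inv := fun g => rfl
        right_inv := fun p => Prod.ext rfl (Subsingleton.elim _ _)
        map_add' := fun g h => Prod.ext rfl (by simp) }
    have hUPT₂ : HasUPT (G × ZMod m₁) := hasUPT_map e₁ hUPT
    rcases hUPT₂ A hAtile with hup | hdup
    · -- uniformly periodic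
      left
      obtain ⟨g₀, hg₀, hg₀all⟩ := hup
      refine ⟨(g₀, 0), fun h0 => hg₀ (Prod.ext_iff.mp h0).1, ?_⟩
      intro T hT
      have hcols : ∀ v, (fun t => t + g₀) '' (col T v) = col T v :=
        fun v => hg₀all (col T v) (hslice T hT v)
      have hmem : ∀ (v : ZMod m₂) (x : G × ZMod m₁), x + g₀ ∈ col T v ↔ x ∈ col T v := by
        intro v x
        constructor
        · intro hx
          rw [← hcols v] at hx
          obtain ⟨y, hy, hyx⟩ := hx
          have : y = x := add_right_cancel hyx
          rwa [← this]
        · intro hx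
          rw [← hcols v]
          exact ⟨x, hx, rfl⟩
      ext z
      constructor
      · rintro ⟨w, hw, rfl⟩
        have hw1 : w.1 ∈ col T w.2 := by rw [mem_col, Prod.mk.eta]; exact hw
        have h2 := (hmem w.2 w.1).mpr hw1
        rw [mem_col] at h2
        have heq : w + ((g₀ : G × ZMod m₁), (0 : ZMod m₂)) = (w.1 + g₀, w.2) :=
          Prod.ext rfl (add_zero _)
        show w + ((g₀ : G × ZMod m₁), (0 : ZMod m₂)) ∈ T
        rw [heq]
        exact h2
      · intro hz
        refine ⟨(z.1 - g₀, z.2), ?_, ?_⟩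
        · have hz1 : z.1 ∈ col T z.2 := by rw [mem_col, Prod.mk.eta]; exact hz
          have : z.1 - g₀ + g₀ ∈ col T z.2 := by rw [sub_add_cancel]; exact hz1
          have h3 := (hmem z.2 (z.1 - g₀)).mp this
          rw [mem_col] at h3
          exact h3
        · exact Prod.ext (sub_add_cancel _ _) (add_zero _)
    · -- dual uniformly periodic
      right
      obtain ⟨A', hA'per, hA'tile, hA'univ⟩ := hdup
      refine ⟨A' ×ˢ ({0} : Set (ZMod m₂)), ?_, ?_, ?_⟩
      · obtain ⟨⟨a, ha⟩, g₁, hg₁, himg⟩ := hA'per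
        refine ⟨⟨(a, 0), ⟨ha, rfl⟩⟩, (g₁, 0), fun h0 => hg₁ (Prod.ext_iff.mp h0).1, ?_⟩
        ext z
        constructor
        · rintro ⟨w, ⟨hw1, hw2⟩, rfl⟩
          refine ⟨?_, ?_⟩
          · show (w + ((g₁ : G × ZMod m₁), (0 : ZMod m₂))).1 ∈ A'
            rw [← himg]
            exact ⟨w.1, hw1, rfl⟩
          · show (w + ((g₁ : G × ZMod m₁), (0 : ZMod m₂))).2 ∈ ({0} : Set (ZMod m₂))
            have : w.2 = 0 := hw2
            show w.2 + 0 = 0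
            rw [this, add_zero]
        · rintro ⟨hz1, hz2⟩
          rw [← himg] at hz1
          obtain ⟨w1, hw1, hw1e⟩ := hz1
          refine ⟨(w1, z.2), ⟨hw1, hz2⟩, ?_⟩
          refine Prod.ext ?_ ?_
          · exact hw1e
          · show z.2 + 0 = z.2
            rw [add_zero]
      · exact ⟨e '' T₀, tp_assemble (fun v => hA'univ (col (e '' T₀) v) (hslice _ hT₂ v))⟩
      · intro T hT
        exact tp_assemble (fun v => hA'univ (col T v) (hslice T hT v))
  · -- m₁ > 1 : build a periodic universal complement directly
    have hAne : A.Nonempty := tp_nonempty_left (hslice _ hT₂ 0)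
    obtain ⟨a₀, ha₀⟩ := hAne
    set x₀ := a₀.2 with hx₀def
    set A₀ := col A x₀ with hA₀def
    have hA₀ne : A₀.Nonempty := ⟨a₀.1, by rw [hA₀def, mem_col, hx₀def, Prod.mk.eta]; exact ha₀⟩
    have hCflat : ∀ C : Set (G × ZMod m₁), IsTilingPair A C →
        IsTilingPair (A₀ ×ˢ (Set.univ : Set (ZMod m₁))) C := by
      intro C hC
      have hCtile : IsTile C := ⟨A, tp_comm hC⟩
      have hexp₁ : Nat.Coprime (AddMonoid.exponent G) m₁ :=
        Nat.Coprime.coprime_dvd_left AddGroup.exponent_dvd_card hcon1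
      have hCcard : A.ncard * C.ncard = n * m₁ := by
        have := tp_card hC
        rwa [Fintype.card_prod, ZMod.card] at this
      have hCm₁ : Nat.Coprime C.ncard m₁ := by
        apply nat_coprime_of_prime
        intro p hp hpC hpm₁
        have hpd : p ∣ d := hpm₁.trans (Nat.gcd_dvd_left d m)
        have hpA : p ∣ A.ncard := by rw [hAcard]; exact hpd
        have hpp : p * p ∣ m₁ * n := by
          have h4 : p * p ∣ A.ncard * C.ncard := mul_dvd_mul hpA hpC
          rw [hCcard] at h4
          rwa [mul_comm n m₁] at h4
        have hpn : Nat.Coprime p n := (Nat.Prime.coprime_iff_not_dvd hp).mpr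
          (fun hpn => coprime_prime_not_dvd hcon1 hp hpn hpm₁)
        have hppm₁ : p * p ∣ m₁ := (Nat.Coprime.mul hpn hpn).dvd_of_dvd_mul_right hpp
        exact hsqunit p hp (hppm₁.trans hm₁dvd)
      obtain ⟨hinjC, hsliceC⟩ := flat hCtile hexp₁ hCm₁
      have hBA := hsliceC A (tp_comm hC) x₀
      exact tp_assemble2 hinjC (tp_comm hBA)
    set Ω' := (A₀ ×ˢ (Set.univ : Set (ZMod m₁))) ×ˢ ({0} : Set (ZMod m₂)) with hΩ'def
    have hΩ'univ : ∀ T : Set ((G × ZMod m₁) × ZMod m₂),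
        IsTilingPair Ω₂ T → IsTilingPair Ω' T := by
      intro T hT
      exact tp_assemble (fun v => hCflat (col T v) (hslice T hT v))
    right
    have h1ne : (1 : ZMod m₁) ≠ 0 := by
      intro h0
      rw [show (1 : ZMod m₁) = ((1 : ℕ) : ZMod m₁) by simp] at h0
      rw [ZMod.natCast_eq_zero_iff] at h0
      exact hm₁1 (Nat.dvd_one.mp h0)
    refine ⟨Ω', ⟨?_, ?_⟩, ?_, hΩ'univ⟩
    · -- nonempty
      obtain ⟨a, ha⟩ := hA₀ne
      exact ⟨((a, x₀), 0), ⟨⟨ha, trivial⟩, rfl⟩⟩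
    · -- period ((0,1),0)
      refine ⟨((0, 1), 0), fun h0 => h1ne (Prod.ext_iff.mp (Prod.ext_iff.mp h0).1).2, ?_⟩
      ext z
      constructor
      · rintro ⟨w, ⟨⟨hw11, -⟩, hw2⟩, rfl⟩
        refine ⟨⟨?_, trivial⟩, ?_⟩
        · show (w + (((0 : G), (1 : ZMod m₁)), (0 : ZMod m₂))).1.1 ∈ A₀
          have : w.1.1 + 0 = w.1.1 := add_zero _
          show w.1.1 + 0 ∈ A₀
          rw [this]
          exact hw11
        · show w.2 + 0 = 0
          have : w.2 = 0 := hw2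
          rw [this, add_zero]
      · rintro ⟨⟨hz11, -⟩, hz2⟩
        refine ⟨((z.1.1, z.1.2 - 1), z.2), ⟨⟨hz11, trivial⟩, hz2⟩, ?_⟩
        refine Prod.ext (Prod.ext ?_ ?_) ?_
        · show z.1.1 + 0 = z.1.1
          rw [add_zero]
        · show z.1.2 - 1 + 1 = z.1.2
          rw [sub_add_cancel]
        · show z.2 + 0 = z.2
          rw [add_zero]
    · exact ⟨e '' T₀, hΩ'univ _ hT₂⟩

end UPTaux

/-- If `G` has the UPT property and `m` is squarefree with `gcd(|G|, m) = 1`,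
then `G × Z_m` also has the UPT property. -/
theorem hasUPT_prod_of_hasUPT (G : Type*) [AddCommGroup G] [Fintype G]
    (m : ℕ) (hm : 0 < m) (hsq : Squarefree m)
    (hgcd : Nat.gcd (Fintype.card G) m = 1) (hUPT : HasUPT G) :
    HasUPT (G × ZMod m) := by
  exact UPTaux.main G m hm hsq hgcd hUPT
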